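/- Let Λ and Λ' be ℤ-lattices in ℂ and let f : ℂ → ℂ be an entire (everywhere complex-differentiable) function such that f(z + λ) − f(z) ∈ Λ' for every z ∈ ℂ and every λ ∈ Λ (so that f descends to a holomorphic map of complex tori ℂ ⧸ Λ → ℂ ⧸ Λ'). Then f is complex affine: there exist γ, δ ∈ ℂ such that f(z) = γ·z + δ for all z ∈ ℂ. -/

import Mathlib

open Bornology Set

theorem entire_descends_to_torus_is_affine
    (Λ Λ' : Submodule ℤ ℂ)
    [DiscreteTopology Λ] [IsZLattice ℝ Λ]
    [DiscreteTopology Λ'] [IsZLattice ℝ Λ']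
    (f : ℂ → ℂ) (hf : Differentiable ℂ f)
    (hper : ∀ z : ℂ, ∀ l ∈ Λ, f (z + l) - f z ∈ Λ') :
    ∃ γ δ : ℂ, ∀ z : ℂ, f z = γ * z + δ := by
  -- Step 1: z ↦ f (z + l) - f z is constant
  have hconst : ∀ l ∈ Λ, ∀ z : ℂ, f (z + l) - f z = f (0 + l) - f 0 := by
    intro l hl z
    set g : ℂ → Λ' := fun z => ⟨f (z + l) - f z, hper z l hl⟩ with hg
    have hgc : Continuous g :=
      Continuous.subtype_mk ((hf.continuous.comp (by continuity)).sub hf.continuous) _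
    have hlc : IsLocallyConstant g := (IsLocallyConstant.iff_continuous g).mpr hgc
    have := hlc.apply_eq_of_preconnectedSpace z 0
    simpa [hg, Subtype.ext_iff] using this
  -- Step 2: deriv f is Λ-periodic
  have hper' : ∀ l ∈ Λ, ∀ z : ℂ, deriv f (z + l) = deriv f z := by
    intro l hl z
    have hfz : ∀ w : ℂ, f (w + l) = f w + (f (0 + l) - f 0) := by
      intro w; have := hconst l hl w; linear_combination this
    calc deriv f (z + l) = deriv (fun w => f (w + l)) z := (deriv_comp_add_const f l z).symm
      _ = deriv (fun w => f w + (f (0 + l) - f 0)) z := by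
          congr 1; funext w; exact hfz w
      _ = deriv f z := by rw [deriv_add_const]
  -- deriv f is entire
  have hdf : Differentiable ℂ (deriv f) := by
    have h : AnalyticOnNhd ℂ f univ := fun z _ => hf.analyticAt z
    exact fun z => (h.deriv z trivial).differentiableAt
  -- Step 3: deriv f is bounded
  have : Module.Free ℤ Λ := ZLattice.module_free ℝ Λ
  have : Module.Finite ℤ Λ := ZLattice.module_finite ℝ Λ
  set b := Module.Free.chooseBasis ℤ Λ
  set b' := Module.Basis.ofZLatticeBasis ℝ Λ b with hb'
  set F := ZSpan.fundamentalDomain b' with hFdef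
  have hFb : IsBounded F := ZSpan.fundamentalDomain_isBounded b'
  have hrange : range (deriv f) ⊆ deriv f '' F := by
    rintro - ⟨z, rfl⟩
    obtain ⟨⟨v, hv⟩, hvF, -⟩ := ZSpan.exist_unique_vadd_mem_fundamentalDomain b' z
    rw [b.ofZLatticeBasis_span ℝ] at hv
    refine ⟨v + z, hvF, ?_⟩
    rw [add_comm]
    exact hper' v hv z
  have hbdd : IsBounded (range (deriv f)) := by
    refine (IsBounded.subset ?_ hrange)
    have hcomp : IsCompact (closure F) := hFb.isCompact_closure
    have : IsCompact (deriv f '' closure F) := hcomp.image hdf.continuous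
    exact this.isBounded.subset (image_mono subset_closure)
  -- Liouville: deriv f is constant
  set γ := deriv f 0 with hγ
  have hdc : ∀ z : ℂ, deriv f z = γ := fun z => hdf.apply_eq_apply_of_bounded hbdd z 0
  -- Step 4: f z - γ z is constant
  have hgd : ∀ z : ℂ, deriv (fun w => f w - γ * w) z = 0 := by
    intro z
    rw [deriv_fun_sub (hf z) (by fun_prop)]
    rw [hdc z, show (HMul.hMul γ) = (fun w => γ * w) from rfl, deriv_const_mul_field]; simp
  have hgdiff : Differentiable ℂ (fun w => f w - γ * w) := hf.sub (by fun_prop)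
  refine ⟨γ, f 0 - γ * 0, fun z => ?_⟩
  have := is_const_of_deriv_eq_zero hgdiff hgd z 0
  linear_combination this
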